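/- Let f : ℝⁿ → ℝ be convex and differentiable and let y ∈ ℝⁿ, y ≠ 0, with ∇f(y) ≠ 0. Then for every d ∈ B_∞(0, r) with d ∉ S_{I(y)}, where r = min{ \underline{y}, \underline{λ}/‖∇f(y)‖₁ }, one has F(y + d) ≥ F(y). -/

import Mathlib

open Finset

/-- The weighted ℓ₀ quasinorm `‖x‖_{0,λ}`. -/
noncomputable def l0norm {n N : ℕ} (blk : Fin n → Fin N) (lam : Fin N → ℝ)
    (x : EuclideanSpace ℝ (Fin n)) : ℝ :=
  ∑ j, if x j ≠ 0 then lam (blk j) else 0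

/-- Membership of an index `j` in `I(x) = supp(x) ∪ {j ∈ 𝒮ᵢ : λᵢ = 0}`. -/
def InIset {n N : ℕ} (blk : Fin n → Fin N) (lam : Fin N → ℝ)
    (x : EuclideanSpace ℝ (Fin n)) (j : Fin n) : Prop :=
  x j ≠ 0 ∨ lam (blk j) = 0

/-- Gradient inequality for a convex differentiable function. -/
lemma grad_ineq {n : ℕ} (f : EuclideanSpace ℝ (Fin n) → ℝ)
    (hconv : ConvexOn ℝ Set.univ f) (y d gy : EuclideanSpace ℝ (Fin n))
    (hg : HasGradientAt f gy y) :
    f y + inner ℝ gy d ≤ f (y + d) := by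
  set φ : ℝ → ℝ := fun t => f (y + t • d) with hφ
  have hderiv : HasDerivAt φ (inner ℝ gy d : ℝ) 0 := by
    have h2 : HasDerivAt (fun t : ℝ => y + t • d) d 0 := by
      simpa using ((hasDerivAt_id (0:ℝ)).smul_const d).const_add y
    have h1 : HasFDerivAt f (InnerProductSpace.toDual ℝ _ gy) ((fun t : ℝ => y + t • d) 0) := by
      simpa using hg.hasFDerivAt
    have h3 := h1.comp_hasDerivAt 0 h2
    simp at h3
    exact h3
  have hφ0 : φ 0 = f y := by simp [hφ]
  have hslope : ∀ t ∈ Set.Ioc (0:ℝ) 1, slope φ 0 t ≤ f (y + d) - f y := by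
    intro t ht
    have ha : (0:ℝ) ≤ 1 - t := by linarith [ht.2]
    have hab : (1 - t) + t = 1 := by ring
    have hc := hconv.2 (Set.mem_univ y) (Set.mem_univ (y + d)) ha ht.1.le hab
    have hpt : (1 - t) • y + t • (y + d) = y + t • d := by module
    rw [hpt] at hc
    rw [slope_def_field, hφ0, sub_zero, div_le_iff₀ ht.1]
    calc φ t - f y ≤ (1 - t) * f y + t * f (y + d) - f y := by
          exact sub_le_sub_right hc _
      _ = (f (y + d) - f y) * t := by ring
  have htend : Filter.Tendsto (slope φ 0) (nhdsWithin 0 (Set.Ioi 0))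
      (nhds (inner ℝ gy d : ℝ)) :=
    (hasDerivAt_iff_tendsto_slope.mp hderiv).mono_left
      (nhdsWithin_mono 0 (fun x hx => ne_of_gt hx))
  have hle : (inner ℝ gy d : ℝ) ≤ f (y + d) - f y :=
    le_of_tendsto htend
      (Filter.eventually_of_mem (Ioc_mem_nhdsGT_of_mem ⟨le_refl 0, zero_lt_one⟩) hslope)
  linarith

theorem statement2 {n N : ℕ} (blk : Fin n → Fin N) (lam : Fin N → ℝ)
    (hlam : ∀ i, 0 ≤ lam i) (hlam_pos : ∃ i, 0 < lam i)
    (f : EuclideanSpace ℝ (Fin n) → ℝ)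
    (g : EuclideanSpace ℝ (Fin n) → EuclideanSpace ℝ (Fin n))
    (hconv : ConvexOn ℝ Set.univ f)
    (hgrad : ∀ x, HasGradientAt f (g x) x)
    (y : EuclideanSpace ℝ (Fin n)) (hy : y ≠ 0) (hgy : g y ≠ 0)
    (r : ℝ)
    (hr : r = min (sInf {t : ℝ | ∃ j, y j ≠ 0 ∧ t = |y j|})
      (sInf {t : ℝ | ∃ i, 0 < lam i ∧ t = lam i} / ∑ j, |g y j|))
    (d : EuclideanSpace ℝ (Fin n))
    (hd_ball : ∀ j, |d j| < r)
    (hd_out : ∃ j, ¬ InIset blk lam y j ∧ d j ≠ 0) :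
    f y + l0norm blk lam y ≤ f (y + d) + l0norm blk lam (y + d) := by
  obtain ⟨j₀, hj₀, hdj₀⟩ := hd_out
  rw [InIset, not_or, not_ne_iff] at hj₀
  obtain ⟨hyj₀, hlj₀⟩ := hj₀
  have hlj₀pos : 0 < lam (blk j₀) := lt_of_le_of_ne (hlam _) (Ne.symm hlj₀)
  set Λ := sInf {t : ℝ | ∃ i, 0 < lam i ∧ t = lam i} with hΛ
  set Y := sInf {t : ℝ | ∃ j, y j ≠ 0 ∧ t = |y j|} with hY
  set S := ∑ j, |g y j| with hS
  -- positivity of S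
  have hSpos : 0 < S := by
    obtain ⟨j, hj⟩ : ∃ j, g y j ≠ 0 := by
      by_contra h
      push_neg at h
      exact hgy (by ext j; exact h j)
    exact Finset.sum_pos' (fun i _ => abs_nonneg _) ⟨j, Finset.mem_univ j, abs_pos.mpr hj⟩
  -- finiteness / bounds of the two sInf sets
  have hΛset : {t : ℝ | ∃ i, 0 < lam i ∧ t = lam i} =
      (fun i => lam i) '' {i | 0 < lam i} := by
    ext t; constructor
    · rintro ⟨i, hi, rfl⟩; exact ⟨i, hi, rfl⟩
    · rintro ⟨i, hi, rfl⟩; exact ⟨i, hi, rfl⟩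
  have hΛfin : ({t : ℝ | ∃ i, 0 < lam i ∧ t = lam i}).Finite := by
    rw [hΛset]; exact (Set.toFinite _).image _
  have hYset : {t : ℝ | ∃ j, y j ≠ 0 ∧ t = |y j|} =
      (fun j => |y j|) '' {j | y j ≠ 0} := by
    ext t; constructor
    · rintro ⟨j, hj, rfl⟩; exact ⟨j, hj, rfl⟩
    · rintro ⟨j, hj, rfl⟩; exact ⟨j, hj, rfl⟩
  have hYfin : ({t : ℝ | ∃ j, y j ≠ 0 ∧ t = |y j|}).Finite := by
    rw [hYset]; exact (Set.toFinite _).image _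
  have hΛle : Λ ≤ lam (blk j₀) :=
    csInf_le hΛfin.bddBelow ⟨blk j₀, hlj₀pos, rfl⟩
  have hYle : ∀ j, y j ≠ 0 → Y ≤ |y j| := fun j hj =>
    csInf_le hYfin.bddBelow ⟨j, hj, rfl⟩
  -- r * S ≤ Λ
  have hrS : r * S ≤ Λ := by
    have : r ≤ Λ / S := by rw [hr]; exact min_le_right _ _
    exact (le_div_iff₀ hSpos).mp this
  -- nonzero components stay nonzero
  have hkeep : ∀ j, y j ≠ 0 → (y + d) j ≠ 0 := by
    intro j hj
    have h1 : Y ≤ |y j| := hYle j hj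
    have h2 : |d j| < r := hd_ball j
    have h3 : r ≤ Y := by rw [hr]; exact min_le_left _ _
    have : |d j| < |y j| := lt_of_lt_of_le h2 (le_trans h3 h1)
    intro hzero
    have hz : y j + d j = 0 := hzero
    have heq : |y j| = |d j| := by rw [show y j = -d j by linarith, abs_neg]
    linarith
  -- l0 norm inequality
  have hl0 : l0norm blk lam y + Λ ≤ l0norm blk lam (y + d) := by
    unfold l0norm
    have hterm : ∀ j ∈ Finset.univ.erase j₀,
        (if y j ≠ 0 then lam (blk j) else 0) ≤
        (if (y + d) j ≠ 0 then lam (blk j) else 0) := by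
      intro j _
      by_cases hj : y j ≠ 0
      · rw [if_pos hj, if_pos (hkeep j hj)]
      · rw [if_neg hj]
        split <;> [exact hlam _; exact le_refl 0]
    have hsplit1 : ∑ j, (if y j ≠ 0 then lam (blk j) else 0) =
        ∑ j ∈ Finset.univ.erase j₀, (if y j ≠ 0 then lam (blk j) else 0) := by
      rw [← Finset.sum_erase_add _ _ (Finset.mem_univ j₀)]
      simp [hyj₀]
    have hsplit2 : ∑ j, (if (y + d) j ≠ 0 then lam (blk j) else 0) =
        ∑ j ∈ Finset.univ.erase j₀, (if (y + d) j ≠ 0 then lam (blk j) else 0)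
          + lam (blk j₀) := by
      have h0 : (y + d) j₀ ≠ 0 := by simpa [hyj₀] using hdj₀
      rw [← Finset.sum_erase_add _ _ (Finset.mem_univ j₀), if_pos h0]
    rw [hsplit1, hsplit2]
    have := Finset.sum_le_sum hterm
    linarith [hΛle]
  -- gradient inequality
  have hgi : f y + inner ℝ (g y) d ≤ f (y + d) := grad_ineq f hconv y d (g y) (hgrad y)
  -- inner product bound
  have hinner : -Λ ≤ (inner ℝ (g y) d : ℝ) := by
    have hib : |(inner ℝ (g y) d : ℝ)| ≤ r * S := by
      rw [PiLp.inner_apply, hS, Finset.mul_sum]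
      refine le_trans (Finset.abs_sum_le_sum_abs _ _) (Finset.sum_le_sum fun j _ => ?_)
      have hin : (inner ℝ (g y j) (d j) : ℝ) = g y j * d j := by
        simp [RCLike.inner_apply, mul_comm]
      rw [hin, abs_mul]
      calc |g y j| * |d j| ≤ |g y j| * r :=
            mul_le_mul_of_nonneg_left (le_of_lt (hd_ball j)) (abs_nonneg _)
        _ = r * |g y j| := mul_comm _ _
    have := neg_abs_le (inner ℝ (g y) d : ℝ)
    linarith [hrS]
  linarith
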